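/- Let k_p, m > 0 and 0 < β < min{√(k_p/m), 4 k_p k_d/(4 m k_p + k_d²)} with k_d > 0. Then the matrix N = [[k_p/m, β],[β, 1]] is positive definite and the matrix W = [[β k_p/m, β k_d/(2m)],[β k_d/(2m), k_d/m − β]] is positive definite. -/

import Mathlib

lemma posDef_fin_two (a b c : ℝ) (ha : 0 < a) (hdet : 0 < a * c - b ^ 2) :
    (!![a, b; b, c] : Matrix (Fin 2) (Fin 2) ℝ).PosDef := by
  rw [Matrix.posDef_iff_dotProduct_mulVec]
  constructor
  · ext i j; fin_cases i <;> fin_cases j <;> rfl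
  · intro x hx
    have h01 : x 0 ≠ 0 ∨ x 1 ≠ 0 := by
      by_contra h
      push_neg at h
      exact hx (funext fun i => by fin_cases i <;> simp [h.1, h.2])
    have key : dotProduct (star x) ((!![a, b; b, c] : Matrix (Fin 2) (Fin 2) ℝ).mulVec x)
        = (a * (x 0 + b / a * x 1) ^ 2 + (a * c - b ^ 2) / a * (x 1) ^ 2) := by
      simp [dotProduct, Matrix.mulVec, Fin.sum_univ_two, Matrix.vecHead, Matrix.vecTail]
      field_simp
      ring
    rw [key]
    rcases h01 with h | h
    · rcases eq_or_ne (x 1) 0 with h1 | h1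
      · have : x 0 + b / a * x 1 ≠ 0 := by simp [h1, h]
        have h2 : 0 < (x 0 + b / a * x 1) ^ 2 := by positivity
        have h3 : 0 ≤ (a * c - b ^ 2) / a * x 1 ^ 2 := by positivity
        nlinarith
      · positivity
    · positivity

theorem cable_length_lyapunov_matrices_posDef (kp kd m β : ℝ)
    (hkp : 0 < kp) (hkd : 0 < kd) (hm : 0 < m) (hβ0 : 0 < β)
    (hβ : β < min (Real.sqrt (kp / m)) (4 * kp * kd / (4 * m * kp + kd ^ 2))) :
    (!![kp / m, β; β, 1] : Matrix (Fin 2) (Fin 2) ℝ).PosDef ∧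
      (!![β * kp / m, β * kd / (2 * m); β * kd / (2 * m), kd / m - β] :
        Matrix (Fin 2) (Fin 2) ℝ).PosDef := by
  have hβ1 : β < Real.sqrt (kp / m) := lt_of_lt_of_le hβ (min_le_left _ _)
  have hβ2 : β < 4 * kp * kd / (4 * m * kp + kd ^ 2) := lt_of_lt_of_le hβ (min_le_right _ _)
  have hb2 : β ^ 2 < kp / m := by
    have := Real.sq_sqrt (le_of_lt (div_pos hkp hm))
    calc β ^ 2 < Real.sqrt (kp / m) ^ 2 := by
          apply pow_lt_pow_left₀ hβ1 hβ0.le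
          · norm_num
      _ = kp / m := Real.sq_sqrt (div_pos hkp hm).le
  have hden : 0 < 4 * m * kp + kd ^ 2 := by positivity
  have hβ2' : β * (4 * m * kp + kd ^ 2) < 4 * kp * kd := by
    rw [← lt_div_iff₀ hden]; exact hβ2
  constructor
  · exact posDef_fin_two _ _ _ (div_pos hkp hm) (by nlinarith)
  · refine posDef_fin_two _ _ _ (by positivity) ?_
    have : β * kp / m * (kd / m - β) - (β * kd / (2 * m)) ^ 2
        = β / (4 * m ^ 2) * (4 * kp * kd - β * (4 * m * kp + kd ^ 2)) := by
      field_simp; ring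
    rw [this]
    apply mul_pos (by positivity)
    linarith
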